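/- The path probability of a positive excursion factorizes through its level numbers: for any positive excursion x, Π_{n=0}^{θ(x)-1} p(x_n, x_{n+1}) = Π_{h=0}^{H(x)-1} (p_h q_{h+1})^{N_h(x)}, where p(k,k+1) = p_k and p(k,k-1) = q_k. -/

import Mathlib

lemma crossing_balance (x : ℕ → ℤ) (θ : ℕ) (h : ℤ) (hh : 0 ≤ h)
    (h0 : x 0 = 0) (hθ : x θ = 0)
    (hstep : ∀ n, n < θ → x (n + 1) - x n = 1 ∨ x (n + 1) - x n = -1) :
    ((Finset.range θ).filter (fun n => x n = h ∧ x (n + 1) = x n + 1)).card =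
    ((Finset.range θ).filter (fun n => x n = h + 1 ∧ x (n + 1) = x n - 1)).card := by
  have key : ∑ n ∈ Finset.range θ,
      ((if x n = h ∧ x (n+1) = x n + 1 then (1:ℤ) else 0)
        - (if x n = h + 1 ∧ x (n+1) = x n - 1 then (1:ℤ) else 0)) = 0 := by
    have hc : ∀ n ∈ Finset.range θ,
        ((if x n = h ∧ x (n+1) = x n + 1 then (1:ℤ) else 0)
        - (if x n = h + 1 ∧ x (n+1) = x n - 1 then (1:ℤ) else 0))
        = (if h < x (n+1) then (1:ℤ) else 0) - (if h < x n then (1:ℤ) else 0) := by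
      intro n hn
      rw [Finset.mem_range] at hn
      rcases hstep n hn with hs | hs <;> split_ifs <;> omega
    rw [Finset.sum_congr rfl hc,
      Finset.sum_range_sub (fun n => if h < x n then (1:ℤ) else 0)]
    simp [h0, hθ, not_lt.2 hh]
  rw [Finset.sum_sub_distrib, sub_eq_zero, Finset.sum_boole, Finset.sum_boole] at key
  exact_mod_cast key


/-- `x` restricted to `[0,θ]` is a positive excursion: starts and ends at `0`,
is strictly positive in the interior, and has jumps `±1`. -/
def IsPosExc (x : ℕ → ℤ) (θ : ℕ) : Prop :=
  x 0 = 0 ∧ x θ = 0 ∧ (∀ n, 0 < n → n < θ → 0 < x n) ∧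
    (∀ n, n < θ → x (n + 1) - x n = 1 ∨ x (n + 1) - x n = -1)

/-- `x` restricted to `[0,θ]` is a negative excursion. -/
def IsNegExc (x : ℕ → ℤ) (θ : ℕ) : Prop :=
  x 0 = 0 ∧ x θ = 0 ∧ (∀ n, 0 < n → n < θ → x n < 0) ∧
    (∀ n, n < θ → x (n + 1) - x n = 1 ∨ x (n + 1) - x n = -1)

/-- Number of individuals of the excursion `x` (of length `θ`) born at level `h`,
i.e. number of up-steps from `h` to `h+1`. -/
def levelCount (x : ℕ → ℤ) (θ : ℕ) (h : ℤ) : ℕ :=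
  ((Finset.range θ).filter (fun n => x n = h ∧ x (n + 1) = x n + 1)).card

/-- For negative excursions: number of individuals born at level `h`,
i.e. number of down-steps from `h` to `h-1`. -/
def levelCountDown (x : ℕ → ℤ) (θ : ℕ) (h : ℤ) : ℕ :=
  ((Finset.range θ).filter (fun n => x n = h ∧ x (n + 1) = x n - 1)).card

/-- `(b,t)` is (the birth/death time pair of) an individual of the excursion `x`:
born at time `b` at level `x b`, with an up-step at `b`, dying at the first
return time `t` to its birth level. -/
def IsIndividual (x : ℕ → ℤ) (θ b t : ℕ) : Prop :=
  b < t ∧ t ≤ θ ∧ x (b + 1) = x b + 1 ∧ x t = x b ∧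
    ∀ n, b < n → n < t → x n ≠ x b

/-- the path probability of a positive excursion factorizes
through its level numbers: `∏_{n<θ} p(x_n,x_{n+1}) = ∏_{h<H} (p_h q_{h+1})^{N_h}`. -/
theorem path_probability_factorizes (p q : ℤ → ℝ) (x : ℕ → ℤ) (θ H : ℕ)
    (hx : IsPosExc x θ)
    (hH : IsGreatest {v : ℤ | ∃ n ≤ θ, x n = v} (H : ℤ)) :
    ∏ n ∈ Finset.range θ, (if x (n + 1) = x n + 1 then p (x n) else q (x n)) =
      ∏ h ∈ Finset.range H, (p (h : ℤ) * q ((h : ℤ) + 1)) ^ levelCount x θ (h : ℤ) := by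
  obtain ⟨h0, hθ, hpos, hstep⟩ := hx
  have hnn : ∀ n, n ≤ θ → 0 ≤ x n := by
    intro n hn
    rcases Nat.lt_or_ge n θ with hlt | hge
    · rcases Nat.eq_zero_or_pos n with rfl | hp
      · simp [h0]
      · exact (hpos n hp hlt).le
    · have : n = θ := le_antisymm hn hge
      simp [this, hθ]
  have hub : ∀ n, n ≤ θ → x n ≤ (H : ℤ) := fun n hn => hH.2 ⟨n, hn, rfl⟩
  have maps : ∀ n ∈ Finset.range θ, (min (x n) (x (n+1))).toNat ∈ Finset.range H := by
    intro n hn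
    rw [Finset.mem_range] at *
    have h1 := hnn n hn.le
    have h2 := hnn (n+1) hn
    have h3 := hub (n+1) hn
    have h4 := hub n hn.le
    rcases hstep n hn with hs | hs <;> omega
  rw [← Finset.prod_fiberwise_of_maps_to maps
    (fun n => if x (n + 1) = x n + 1 then p (x n) else q (x n))]
  apply Finset.prod_congr rfl
  intro h hh
  rw [Finset.mem_range] at hh
  have hF : (Finset.range θ).filter (fun n => (min (x n) (x (n+1))).toNat = h)
      = ((Finset.range θ).filter (fun n => x n = (h:ℤ) ∧ x (n + 1) = x n + 1))
        ∪ ((Finset.range θ).filter (fun n => x n = (h:ℤ) + 1 ∧ x (n + 1) = x n - 1)) := by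
    ext n
    simp only [Finset.mem_filter, Finset.mem_union, Finset.mem_range]
    constructor
    · rintro ⟨hn, hmin⟩
      have h1 := hnn n hn.le
      have h2 := hnn (n+1) hn
      rcases hstep n hn with hs | hs
      · exact Or.inl ⟨hn, by omega, by omega⟩
      · exact Or.inr ⟨hn, by omega, by omega⟩
    · rintro (⟨hn, e1, e2⟩ | ⟨hn, e1, e2⟩) <;> exact ⟨hn, by omega⟩
  have hdisj : Disjoint
      ((Finset.range θ).filter (fun n => x n = (h:ℤ) ∧ x (n + 1) = x n + 1))
      ((Finset.range θ).filter (fun n => x n = (h:ℤ) + 1 ∧ x (n + 1) = x n - 1)) := by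
    rw [Finset.disjoint_left]
    intro n hn1 hn2
    simp only [Finset.mem_filter] at hn1 hn2
    omega
  rw [hF, Finset.prod_union hdisj]
  have e1 : ∏ n ∈ (Finset.range θ).filter (fun n => x n = (h:ℤ) ∧ x (n + 1) = x n + 1),
      (if x (n + 1) = x n + 1 then p (x n) else q (x n)) = p (h:ℤ) ^ levelCount x θ (h:ℤ) := by
    rw [Finset.prod_congr rfl (fun n hn => ?_), Finset.prod_const, levelCount]
    simp only [Finset.mem_filter] at hn
    rw [if_pos hn.2.2, hn.2.1]
  have e2 : ∏ n ∈ (Finset.range θ).filter (fun n => x n = (h:ℤ) + 1 ∧ x (n + 1) = x n - 1),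
      (if x (n + 1) = x n + 1 then p (x n) else q (x n))
      = q ((h:ℤ) + 1) ^ levelCount x θ (h:ℤ) := by
    rw [Finset.prod_congr rfl (fun n hn => ?_), Finset.prod_const,
      ← crossing_balance x θ (h:ℤ) (by positivity) h0 hθ hstep, levelCount]
    simp only [Finset.mem_filter] at hn
    rw [if_neg (by omega), hn.2.1]
  rw [e1, e2, mul_pow]
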